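/- Let R be a commutative ring. For a set X, let 𝒜(X) be the free R-module on X. A correspondence (A, s, t) from X to Y with s having finite fibers induces an R-linear map 𝒜(A,s,t) : 𝒜(X) → 𝒜(Y) sending a generator x to Σ_{a ∈ s⁻¹(x)} t(a). Then for composable locally finite correspondences (A, s_A, t_A) from X to Y and (B, s_B, t_B) from Y to Z, the linearization of the composite correspondence B ×_Y A equals the composite 𝒜(B, s_B, t_B) ∘ 𝒜(A, s_A, t_A). -/
import Mathlib


open Finsupp

/-- The linearization of a locally finite correspondence `(A, s, t)` from `X` to `Y`:
the `R`-linear map `R⟨X⟩ → R⟨Y⟩` sending a generator `x` to `Σ_{a ∈ s⁻¹(x)} t(a)`. -/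
noncomputable def linearize (R : Type*) [CommRing R] {X Y A : Type*}
    (s : A → X) (t : A → Y) (h : ∀ x : X, (s ⁻¹' {x}).Finite) :
    (X →₀ R) →ₗ[R] (Y →₀ R) :=
  Finsupp.lsum R (fun x => ∑ a ∈ (h x).toFinset, Finsupp.lsingle (t a))

theorem stmt_8 (R : Type*) [CommRing R] {X Y Z A B : Type*}
    (sA : A → X) (tA : A → Y) (sB : B → Y) (tB : B → Z)
    (hA : ∀ x : X, (sA ⁻¹' {x}).Finite)
    (hB : ∀ y : Y, (sB ⁻¹' {y}).Finite)
    (hC : ∀ x : X,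
      ((fun c : {p : B × A // tA p.2 = sB p.1} => sA c.1.2) ⁻¹' {x}).Finite) :
    linearize R (fun c : {p : B × A // tA p.2 = sB p.1} => sA c.1.2)
        (fun c => tB c.1.1) hC
      = (linearize R sB tB hB).comp (linearize R sA tA hA) := by
  apply Finsupp.lhom_ext
  intro x r
  simp only [linearize, LinearMap.comp_apply, Finsupp.lsum_single, LinearMap.sum_apply,
    Finsupp.lsingle_apply, map_sum]
  rw [← Finset.sum_sigma ((hA x).toFinset) (fun a => (hB (tA a)).toFinset)
    (fun p => Finsupp.single (tB p.2) r)]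
  refine Finset.sum_bij' (fun c _ => (⟨c.1.2, c.1.1⟩ : (a : A) × B))
    (fun p hp => ⟨(p.2, p.1), ?_⟩) ?_ ?_ ?_ ?_ ?_
  · rw [Finset.mem_sigma] at hp
    have := hp.2
    rw [Set.Finite.mem_toFinset, Set.mem_preimage, Set.mem_singleton_iff] at this
    exact this.symm
  · intro c hc
    rw [Set.Finite.mem_toFinset, Set.mem_preimage, Set.mem_singleton_iff] at hc
    rw [Finset.mem_sigma]
    constructor
    · rw [Set.Finite.mem_toFinset, Set.mem_preimage, Set.mem_singleton_iff]
      exact hc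
    · rw [Set.Finite.mem_toFinset, Set.mem_preimage, Set.mem_singleton_iff]
      exact c.2.symm
  · intro p hp
    rw [Finset.mem_sigma] at hp
    rw [Set.Finite.mem_toFinset, Set.mem_preimage, Set.mem_singleton_iff]
    have := hp.1
    rwa [Set.Finite.mem_toFinset, Set.mem_preimage, Set.mem_singleton_iff] at this
  · intro c hc; rfl
  · intro p hp; rfl
  · intro c hc; rfl
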